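/- Suppose θ̄·A'(1) < 1 − γ. Then every triple (λ_low*, λ_high*, θ̂*) maximizing Π^bin(λ_low, λ_high, θ̂) over the set {(λ_low, λ_high, θ̂) : 0 < λ_low ≤ λ_high ≤ 1, θ̂ ∈ [0,θ̄]} satisfies λ_low* < λ_high* (the two optimal certificates are distinct). -/

import Mathlib

open Set MeasureTheory intervalIntegral

/-- Effective virtual value `R(x, λ) = (x + (1−λ)/λ)·A(λ) − γ/λ`. -/
noncomputable def R (A : ℝ → ℝ) (γ x l : ℝ) : ℝ := (x + (1 - l) / l) * A l - γ / l

/-- Pointwise-optimal views `V^{s,λ}(θ) = (c')⁻¹(max{R(φ(θ),λ), 0})`. -/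
noncomputable def Vs (A cinv : ℝ → ℝ) (γ x l : ℝ) : ℝ := cinv (max (R A γ x l) 0)

/-- Pointwise profit contribution `π(θ, λ) = R(φθ,λ)·V^{s,λ}(θ) − c(V^{s,λ}(θ))`. -/
noncomputable def pointProfit (A c cinv : ℝ → ℝ) (γ x l : ℝ) : ℝ :=
  R A γ x l * Vs A cinv γ x l - c (Vs A cinv γ x l)

/-- Two-certificate profit `Π^bin(λ_low, λ_high, θ̂)`. -/
noncomputable def Pibin (A c cinv φ f : ℝ → ℝ) (γ θb llo lhi θhat : ℝ) : ℝ :=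
  (∫ θ in (0:ℝ)..θhat, pointProfit A c cinv γ (φ θ) llo * f θ) +
    ∫ θ in θhat..θb, pointProfit A c cinv γ (φ θ) lhi * f θ

/-! ### Auxiliary definitions and lemmas -/

/-- The "indirect profit" function `G(y) = y·(c')⁻¹(y⁺) − c((c')⁻¹(y⁺))`. -/
noncomputable def Gfun (c cinv : ℝ → ℝ) (y : ℝ) : ℝ :=
  y * cinv (max y 0) - c (cinv (max y 0))

lemma pointProfit_eq (A c cinv : ℝ → ℝ) (γ x l : ℝ) :
    pointProfit A c cinv γ x l = Gfun c cinv (R A γ x l) := rfl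

lemma R_shift (A : ℝ → ℝ) (γ θb x l : ℝ) :
    R A γ x l = A l * (x - θb) + R A γ θb l := by
  simp only [R]; ring

lemma R_mono_x {A : ℝ → ℝ} {γ x x' l : ℝ} (hx : x ≤ x') (hAl : 0 ≤ A l) :
    R A γ x l ≤ R A γ x' l := by
  simp only [R]; nlinarith

lemma R_one {A : ℝ → ℝ} (hA1 : A 1 = 1) (γ x : ℝ) : R A γ x 1 = x - γ := by
  simp [R, hA1]

/-- Derivative of `λ ↦ R A γ x λ` (for fixed `x`) within a set. -/
lemma R_hasDerivWithinAt {A A' : ℝ → ℝ} {s : Set ℝ} {p : ℝ} (hp : p ≠ 0)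
    (hA : HasDerivWithinAt A (A' p) s p) (γ x : ℝ) :
    HasDerivWithinAt (fun l => R A γ x l)
      ((x + (1 - p)/p) * A' p - A p / p^2 + γ / p^2) s p := by
  have d1 : HasDerivWithinAt (fun l : ℝ => (1 - l)/l)
      (((-1) * p - (1 - p) * 1) / p^2) s p :=
    ((hasDerivWithinAt_id p s).const_sub 1).div (hasDerivWithinAt_id p s) hp
  have d2 : HasDerivWithinAt (fun l : ℝ => x + (1 - l)/l)
      (((-1) * p - (1 - p) * 1) / p^2) s p := d1.const_add x
  have d3 := d2.mul hA
  have d4 : HasDerivWithinAt (fun l : ℝ => γ / l) ((0 * p - γ * 1) / p^2) s p :=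
    (hasDerivWithinAt_const p s γ).div (hasDerivWithinAt_id p s) hp
  have d5 := d3.sub d4
  have : (fun l => R A γ x l) = fun l => (x + (1 - l)/l) * A l - γ / l := rfl
  rw [this]
  refine d5.congr_deriv ?_
  ring

lemma R_comp_cwa {A φ : ℝ → ℝ} {γ θb l t : ℝ}
    (hφ : ContinuousWithinAt φ (Icc 0 θb) t) :
    ContinuousWithinAt (fun θ => R A γ (φ θ) l) (Icc 0 θb) t := by
  have : (fun θ => R A γ (φ θ) l) = fun θ => (φ θ + (1 - l)/l) * A l - γ/l := rfl
  rw [this]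
  exact ((hφ.add continuousWithinAt_const).mul continuousWithinAt_const).sub
    continuousWithinAt_const

section Aux

variable {c c' cinv : ℝ → ℝ}

lemma tangent_le (hconv : ConvexOn ℝ (Ici 0) c)
    (hcderiv : ∀ v ∈ Ici (0:ℝ), HasDerivWithinAt c (c' v) (Ici 0) v)
    {v w : ℝ} (hv : 0 ≤ v) (hw : 0 ≤ w) :
    c v + c' v * (w - v) ≤ c w := by
  rcases lt_trichotomy v w with h | h | h
  · have h1 := hconv.le_slope_of_hasDerivWithinAt hv hw h (hcderiv v hv)
    rw [slope_def_field] at h1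
    have hwv : 0 < w - v := by linarith
    rw [le_div_iff₀ hwv] at h1
    nlinarith
  · simp [h]
  · have h1 := hconv.slope_le_of_hasDerivWithinAt hw hv h (hcderiv v hv)
    rw [slope_def_field] at h1
    have hwv : 0 < v - w := by linarith
    rw [div_le_iff₀ hwv] at h1
    nlinarith

variable (hc0 : c 0 = 0) (hc'0 : c' 0 = 0)
variable (hcmono : StrictMonoOn c (Ici 0))
variable (hcconv : StrictConvexOn ℝ (Ici 0) c)
variable (hcderiv : ∀ v ∈ Ici (0:ℝ), HasDerivWithinAt c (c' v) (Ici 0) v)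
variable (hcinv₁ : ∀ v, 0 ≤ v → cinv (c' v) = v)
variable (hcinv₂ : ∀ y, 0 ≤ y → 0 ≤ cinv y ∧ c' (cinv y) = y)

include hc0 hcmono in
lemma c_nonneg {w : ℝ} (hw : 0 ≤ w) : 0 ≤ c w := by
  have := hcmono.monotoneOn (self_mem_Ici) (mem_Ici.2 hw) hw
  rwa [hc0] at this

include hc0 hc'0 hcinv₁ in
lemma Gfun_of_nonpos {y : ℝ} (hy : y ≤ 0) : Gfun c cinv y = 0 := by
  have h0 : cinv 0 = 0 := by have := hcinv₁ 0 le_rfl; rwa [hc'0] at this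
  simp [Gfun, max_eq_right hy, h0, hc0]

include hc0 hc'0 hcmono hcconv hcderiv hcinv₁ hcinv₂ in
lemma Gfun_ge {w : ℝ} (hw : 0 ≤ w) (y : ℝ) : y * w - c w ≤ Gfun c cinv y := by
  rcases le_or_gt y 0 with hy | hy
  · rw [Gfun_of_nonpos hc0 hc'0 hcinv₁ hy]
    have h1 : y * w ≤ 0 := mul_nonpos_of_nonpos_of_nonneg hy hw
    have h2 := c_nonneg hc0 hcmono hw
    linarith
  · obtain ⟨hv0, hv1⟩ := hcinv₂ y hy.le
    have ht := tangent_le hcconv.convexOn hcderiv hv0 hw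
    rw [hv1] at ht
    rw [Gfun, max_eq_left hy.le]
    nlinarith

include hc0 hc'0 hcmono hcconv hcderiv hcinv₁ hcinv₂ in
lemma Gfun_nonneg (y : ℝ) : 0 ≤ Gfun c cinv y := by
  have := Gfun_ge hc0 hc'0 hcmono hcconv hcderiv hcinv₁ hcinv₂ (le_refl (0:ℝ)) y
  simpa [hc0] using this

include hc0 hc'0 hcmono hcconv hcderiv hcinv₁ hcinv₂ in
lemma Gfun_mono : Monotone (Gfun c cinv) := by
  intro a b hab
  rcases le_or_gt a 0 with ha | ha
  · rw [Gfun_of_nonpos hc0 hc'0 hcinv₁ ha]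
    exact Gfun_nonneg hc0 hc'0 hcmono hcconv hcderiv hcinv₁ hcinv₂ b
  · obtain ⟨hv0, _⟩ := hcinv₂ a ha.le
    have h1 := Gfun_ge hc0 hc'0 hcmono hcconv hcderiv hcinv₁ hcinv₂ hv0 b
    rw [Gfun, max_eq_left ha.le]
    have h2 : a * cinv a ≤ b * cinv a := mul_le_mul_of_nonneg_right hab hv0
    linarith

include hc0 hc'0 hcconv hcderiv hcinv₂ in
lemma Gfun_pos {y : ℝ} (hy : 0 < y) : 0 < Gfun c cinv y := by
  obtain ⟨hv0, hv1⟩ := hcinv₂ y hy.le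
  have hvne : cinv y ≠ 0 := by
    intro h; rw [h, hc'0] at hv1; exact absurd hv1.symm (ne_of_gt hy)
  have hvpos : 0 < cinv y := lt_of_le_of_ne hv0 (Ne.symm hvne)
  set v := cinv y with hv
  have hmid : c (2⁻¹ * v) < 2⁻¹ * c v := by
    have := hcconv.2 (self_mem_Ici) (mem_Ici.2 hv0) (Ne.symm hvne)
      (by norm_num : (0:ℝ) < 1/2) (by norm_num : (0:ℝ) < 1/2) (by norm_num)
    simpa [hc0, smul_eq_mul] using this
  have ht := tangent_le hcconv.convexOn hcderiv hv0 (by positivity : (0:ℝ) ≤ 2⁻¹ * v)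
  rw [hv1] at ht
  have hyv : c v < y * v := by nlinarith
  rw [Gfun, max_eq_left hy.le]
  nlinarith

include hc0 hc'0 hcmono hcconv hcderiv hcinv₁ hcinv₂ in
lemma Gfun_superadd {a d : ℝ} (ha : 0 ≤ a) (hd : 0 ≤ d) :
    Gfun c cinv a + Gfun c cinv d ≤ Gfun c cinv (a + d) := by
  rcases le_or_gt (a + d) 0 with hs | hs
  · have ha0 : a = 0 := le_antisymm (by linarith) ha
    have hd0 : d = 0 := le_antisymm (by linarith) hd
    simp [ha0, hd0, Gfun_of_nonpos hc0 hc'0 hcinv₁ (le_refl (0:ℝ))]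
  · obtain ⟨hva, _⟩ := hcinv₂ a ha
    obtain ⟨hvd, _⟩ := hcinv₂ d hd
    have Ha := Gfun_ge hc0 hc'0 hcmono hcconv hcderiv hcinv₁ hcinv₂ hva (a + d)
    have Hd := Gfun_ge hc0 hc'0 hcmono hcconv hcderiv hcinv₁ hcinv₂ hvd (a + d)
    have hca := c_nonneg hc0 hcmono hva
    have hcd := c_nonneg hc0 hcmono hvd
    have hGa : Gfun c cinv a = a * cinv a - c (cinv a) := by
      rw [Gfun, max_eq_left ha]
    have hGd : Gfun c cinv d = d * cinv d - c (cinv d) := by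
      rw [Gfun, max_eq_left hd]
    have h1 : a * ((a + d) * cinv a - c (cinv a)) ≤ a * Gfun c cinv (a + d) :=
      mul_le_mul_of_nonneg_left Ha ha
    have h2 : d * ((a + d) * cinv d - c (cinv d)) ≤ d * Gfun c cinv (a + d) :=
      mul_le_mul_of_nonneg_left Hd hd
    have hs' : (a + d) * (Gfun c cinv a + Gfun c cinv d)
        ≤ (a + d) * Gfun c cinv (a + d) := by nlinarith
    exact le_of_mul_le_mul_left hs' hs

include hc0 hc'0 hcmono hcconv hcderiv hcinv₁ hcinv₂ in
lemma Gfun_gap {a d y' : ℝ} (hd : 0 < d) (hy' : max a 0 + d ≤ y') :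
    Gfun c cinv a + Gfun c cinv d ≤ Gfun c cinv y' := by
  rcases le_or_gt a 0 with ha | ha
  · rw [Gfun_of_nonpos hc0 hc'0 hcinv₁ ha]
    rw [max_eq_right ha] at hy'
    have := Gfun_mono hc0 hc'0 hcmono hcconv hcderiv hcinv₁ hcinv₂
      (by linarith : d ≤ y')
    linarith
  · rw [max_eq_left ha.le] at hy'
    have h1 := Gfun_superadd hc0 hc'0 hcmono hcconv hcderiv hcinv₁ hcinv₂ ha.le hd.le
    have h2 := Gfun_mono hc0 hc'0 hcmono hcconv hcderiv hcinv₁ hcinv₂ hy'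
    linarith

end Aux

/-- From a strict inequality at `t` and continuity within `Icc 0 θb`, get a
left interval `[s,t]` on which the inequality persists. -/
lemma near_left {θb : ℝ} (u : ℝ → ℝ) {t cc : ℝ} (ht : t ∈ Icc 0 θb) (ht0 : 0 < t)
    (hu : ContinuousWithinAt u (Icc 0 θb) t) (hc : cc < u t) :
    ∃ s, 0 < s ∧ s < t ∧ ∀ θ ∈ Icc s t, cc < u θ := by
  have hmem : u ⁻¹' (Ioi cc) ∈ nhdsWithin t (Icc 0 θb) := hu (Ioi_mem_nhds hc)
  rw [Metric.mem_nhdsWithin_iff] at hmem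
  obtain ⟨ε, hε, hball⟩ := hmem
  refine ⟨max (t - ε/2) (t/2), lt_max_of_lt_right (by linarith),
    max_lt (by linarith) (by linarith), ?_⟩
  intro θ hθ
  have hθ1 : t - ε/2 ≤ θ := le_trans (le_max_left _ _) hθ.1
  have hθ2 : t/2 ≤ θ := le_trans (le_max_right _ _) hθ.1
  have hθIcc : θ ∈ Icc 0 θb := ⟨by linarith, le_trans hθ.2 ht.2⟩
  have hdist : θ ∈ Metric.ball t ε := by
    rw [Metric.mem_ball, Real.dist_eq, abs_lt]
    constructor <;> [linarith [hθ.2, hθ1]; linarith [hθ.2]]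
  exact hball ⟨hdist, hθIcc⟩

/-- Strict comparison of interval integrals from a pointwise `≤` plus a uniform
gap on a subinterval. -/
lemma gain_pos {h1 h2 : ℝ → ℝ} {a b s t ε : ℝ}
    (hst : s < t) (has : a ≤ s) (htb : t ≤ b) (hε : 0 < ε)
    (int1 : IntervalIntegrable h1 volume a b) (int2 : IntervalIntegrable h2 volume a b)
    (hle : ∀ θ ∈ Icc a b, h1 θ ≤ h2 θ)
    (hgap : ∀ θ ∈ Icc s t, h1 θ + ε ≤ h2 θ) :
    (∫ θ in a..b, h1 θ) < ∫ θ in a..b, h2 θ := by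
  have hab : a ≤ b := le_trans has (le_trans hst.le htb)
  have intd : IntervalIntegrable (fun θ => h2 θ - h1 θ) volume a b := int2.sub int1
  have hsub1 : uIcc a s ⊆ uIcc a b := uIcc_subset_uIcc (by simp [uIcc_of_le hab, hab])
    (by simp [uIcc_of_le hab, has, le_trans hst.le htb])
  have hsub2 : uIcc s t ⊆ uIcc a b := uIcc_subset_uIcc
    (by simp [uIcc_of_le hab, has, le_trans hst.le htb])
    (by simp [uIcc_of_le hab, htb, le_trans has hst.le])
  have hsub3 : uIcc t b ⊆ uIcc a b := uIcc_subset_uIcc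
    (by simp [uIcc_of_le hab, htb, le_trans has hst.le]) (by simp [uIcc_of_le hab, hab])
  have i1 := intd.mono_set hsub1
  have i2 := intd.mono_set hsub2
  have i3 := intd.mono_set hsub3
  have hsplit : (∫ θ in a..s, (h2 θ - h1 θ)) + (∫ θ in s..t, (h2 θ - h1 θ))
      + (∫ θ in t..b, (h2 θ - h1 θ)) = ∫ θ in a..b, (h2 θ - h1 θ) := by
    rw [integral_add_adjacent_intervals i1 i2,
      integral_add_adjacent_intervals (i1.trans i2) i3]
  have hn1 : 0 ≤ ∫ θ in a..s, (h2 θ - h1 θ) := by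
    apply integral_nonneg has
    intro θ hθ
    have : θ ∈ Icc a b := ⟨hθ.1, le_trans hθ.2 (le_trans hst.le htb)⟩
    linarith [hle θ this]
  have hn3 : 0 ≤ ∫ θ in t..b, (h2 θ - h1 θ) := by
    apply integral_nonneg htb
    intro θ hθ
    have : θ ∈ Icc a b := ⟨le_trans has (le_trans hst.le hθ.1), hθ.2⟩
    linarith [hle θ this]
  have hn2 : ε * (t - s) ≤ ∫ θ in s..t, (h2 θ - h1 θ) := by
    have hconst : (∫ _ in s..t, ε) ≤ ∫ θ in s..t, (h2 θ - h1 θ) := by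
      apply integral_mono_on hst.le intervalIntegrable_const i2
      intro θ hθ
      linarith [hgap θ hθ]
    rwa [intervalIntegral.integral_const, smul_eq_mul, mul_comm] at hconst
  have hpos : 0 < ∫ θ in a..b, (h2 θ - h1 θ) := by
    rw [← hsplit]
    have : 0 < ε * (t - s) := mul_pos hε (by linarith)
    linarith
  rw [integral_sub int2 int1] at hpos
  linarith

/-- Integrability of the pointwise profit integrand. -/
lemma profit_intervalIntegrable {A c cinv φ f : ℝ → ℝ} {γ θb l : ℝ}
    (hθb : 0 < θb)
    (hGmono : Monotone (Gfun c cinv)) (hGnn : ∀ y, 0 ≤ Gfun c cinv y)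
    (hAl : 0 ≤ A l)
    (hφcont : ContinuousOn φ (Icc 0 θb)) (hφmono : StrictMonoOn φ (Icc 0 θb))
    (hφtop : φ θb = θb)
    (hfcont : ContinuousOn f (Icc 0 θb)) (hfpos : ∀ θ ∈ Icc (0:ℝ) θb, 0 < f θ)
    {a b : ℝ} (ha : a ∈ Icc 0 θb) (hb : b ∈ Icc 0 θb) :
    IntervalIntegrable (fun θ => Gfun c cinv (R A γ (φ θ) l) * f θ) volume a b := by
  rw [intervalIntegrable_iff]
  have hIoc : uIoc a b ⊆ Icc 0 θb := by
    intro x hx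
    rcases hx with ⟨h1, h2⟩
    exact ⟨le_trans (le_min ha.1 hb.1) h1.le, le_trans h2 (max_le ha.2 hb.2)⟩
  apply IntegrableOn.mono_set _ hIoc
  have hφm : AEMeasurable φ (volume.restrict (Icc 0 θb)) :=
    hφcont.aemeasurable measurableSet_Icc
  have hfm : AEMeasurable f (volume.restrict (Icc 0 θb)) :=
    hfcont.aemeasurable measurableSet_Icc
  have hRmeas : Measurable (fun x : ℝ => R A γ x l) := by
    have : (fun x : ℝ => R A γ x l) = fun x => (x + (1 - l)/l) * A l - γ/l := rfl
    rw [this]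
    exact ((measurable_id.add_const _).mul_const _).sub_const _
  have hmain : AEMeasurable (fun θ => Gfun c cinv (R A γ (φ θ) l) * f θ)
      (volume.restrict (Icc 0 θb)) :=
    ((hGmono.measurable.comp hRmeas).comp_aemeasurable hφm).mul hfm
  obtain ⟨θM, hθM, hM⟩ := isCompact_Icc.exists_isMaxOn (⟨0, left_mem_Icc.2 hθb.le⟩ :
    (Icc (0:ℝ) θb).Nonempty) hfcont
  apply Integrable.mono' (integrable_const (Gfun c cinv (R A γ θb l) * f θM))
    hmain.aestronglyMeasurable
  rw [ae_restrict_iff' measurableSet_Icc]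
  filter_upwards with θ hθ
  have hφθ : φ θ ≤ θb := by
    have := hφmono.monotoneOn hθ (right_mem_Icc.2 hθb.le) hθ.2
    rwa [hφtop] at this
  have h1 : Gfun c cinv (R A γ (φ θ) l) ≤ Gfun c cinv (R A γ θb l) :=
    hGmono (R_mono_x hφθ hAl)
  have h2 : f θ ≤ f θM := hM hθ
  have h3 : 0 < f θ := hfpos θ hθ
  rw [Real.norm_eq_abs, abs_of_nonneg (mul_nonneg (hGnn _) h3.le)]
  exact mul_le_mul h1 h2 h3.le (hGnn _)

set_option maxHeartbeats 1000000 in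
/-- if `θ̄·A'(1) < 1 − γ`, every optimal pair of two certificates
is strictly separated: `λ_low* < λ_high*`. -/
theorem stmt2
    (θb γ : ℝ) (A A' c c' cinv φ f : ℝ → ℝ)
    (hθb : 0 < θb) (hγ0 : 0 < γ) (hγ1 : γ < 1) (hγθ : γ < θb)
    (hA0 : A 0 = 0) (hA1 : A 1 = 1)
    (hAmono : StrictMonoOn A (Icc 0 1))
    (hAderiv : ∀ y ∈ Icc (0:ℝ) 1, HasDerivWithinAt A (A' y) (Icc 0 1) y)
    (hc0 : c 0 = 0) (hc'0 : c' 0 = 0)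
    (hcmono : StrictMonoOn c (Ici 0))
    (hcconv : StrictConvexOn ℝ (Ici 0) c)
    (hcderiv : ∀ v ∈ Ici (0:ℝ), HasDerivWithinAt c (c' v) (Ici 0) v)
    (hc'top : Filter.Tendsto c' Filter.atTop Filter.atTop)
    (hcinv₁ : ∀ v, 0 ≤ v → cinv (c' v) = v)
    (hcinv₂ : ∀ y, 0 ≤ y → 0 ≤ cinv y ∧ c' (cinv y) = y)
    (hφcont : ContinuousOn φ (Icc 0 θb))
    (hφmono : StrictMonoOn φ (Icc 0 θb))
    (hφtop : φ θb = θb) (hφ0 : φ 0 < 0)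
    (hfcont : ContinuousOn f (Icc 0 θb))
    (hfpos : ∀ θ ∈ Icc (0:ℝ) θb, 0 < f θ)
    (hslope : θb * A' 1 < 1 - γ) :
    ∀ llo lhi θhat : ℝ, 0 < llo → llo ≤ lhi → lhi ≤ 1 → θhat ∈ Icc (0:ℝ) θb →
      (∀ llo' lhi' θhat' : ℝ, 0 < llo' → llo' ≤ lhi' → lhi' ≤ 1 → θhat' ∈ Icc (0:ℝ) θb →
        Pibin A c cinv φ f γ θb llo' lhi' θhat' ≤ Pibin A c cinv φ f γ θb llo lhi θhat) →
      llo < lhi := by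
  intro llo lhi θhat hllo hlohi hhi1 hθhat hopt
  by_contra hcon
  have hEq : llo = lhi := le_antisymm hlohi (not_lt.mp hcon)
  rw [← hEq] at hopt hhi1
  clear hcon hlohi hEq lhi
  -- basic abbreviations and facts
  have hGmono : Monotone (Gfun c cinv) :=
    Gfun_mono hc0 hc'0 hcmono hcconv hcderiv hcinv₁ hcinv₂
  have hGnn : ∀ y, 0 ≤ Gfun c cinv y :=
    Gfun_nonneg hc0 hc'0 hcmono hcconv hcderiv hcinv₁ hcinv₂
  have hGpos : ∀ {y : ℝ}, 0 < y → 0 < Gfun c cinv y :=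
    fun hy => Gfun_pos hc0 hc'0 hcconv hcderiv hcinv₂ hy
  have hG0 : ∀ {y : ℝ}, y ≤ 0 → Gfun c cinv y = 0 :=
    fun hy => Gfun_of_nonpos hc0 hc'0 hcinv₁ hy
  have hGgap : ∀ {a d y' : ℝ}, 0 < d → max a 0 + d ≤ y' →
      Gfun c cinv a + Gfun c cinv d ≤ Gfun c cinv y' :=
    fun hd hy' => Gfun_gap hc0 hc'0 hcmono hcconv hcderiv hcinv₁ hcinv₂ hd hy'
  have hApos : ∀ l : ℝ, 0 < l → l ≤ 1 → 0 < A l := by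
    intro l h0 h1
    have := hAmono (left_mem_Icc.2 zero_le_one) ⟨h0.le, h1⟩ h0
    rwa [hA0] at this
  have hAllo : 0 < A llo := hApos llo hllo hhi1
  have hA1pos : (0:ℝ) < A 1 := by rw [hA1]; norm_num
  -- f bounded below
  obtain ⟨θm, hθm, hfminOn⟩ := isCompact_Icc.exists_isMinOn
    (⟨0, left_mem_Icc.2 hθb.le⟩ : (Icc (0:ℝ) θb).Nonempty) hfcont
  have hfm : 0 < f θm := hfpos θm hθm
  have hfmin : ∀ θ ∈ Icc (0:ℝ) θb, f θm ≤ f θ := fun θ hθ => hfminOn hθ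
  -- integrability
  have hInt : ∀ l : ℝ, 0 ≤ A l → ∀ a b : ℝ, a ∈ Icc (0:ℝ) θb → b ∈ Icc (0:ℝ) θb →
      IntervalIntegrable (fun θ => Gfun c cinv (R A γ (φ θ) l) * f θ) volume a b :=
    fun l hAl a b ha hb => profit_intervalIntegrable hθb hGmono hGnn hAl
      hφcont hφmono hφtop hfcont hfpos ha hb
  have h0mem : (0:ℝ) ∈ Icc (0:ℝ) θb := left_mem_Icc.2 hθb.le
  have hbmem : θb ∈ Icc (0:ℝ) θb := right_mem_Icc.2 hθb.le
  -- Pibin in Gfun form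
  have hPib : ∀ l1 l2 t : ℝ, Pibin A c cinv φ f γ θb l1 l2 t =
      (∫ θ in (0:ℝ)..t, Gfun c cinv (R A γ (φ θ) l1) * f θ) +
        ∫ θ in t..θb, Gfun c cinv (R A γ (φ θ) l2) * f θ := by
    intro l1 l2 t
    simp only [Pibin, pointProfit_eq]
  have hsplitt : ∀ t ∈ Icc (0:ℝ) θb,
      (∫ θ in (0:ℝ)..t, Gfun c cinv (R A γ (φ θ) llo) * f θ) +
        (∫ θ in t..θb, Gfun c cinv (R A γ (φ θ) llo) * f θ) =
      ∫ θ in (0:ℝ)..θb, Gfun c cinv (R A γ (φ θ) llo) * f θ :=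
    fun t ht => integral_add_adjacent_intervals
      (hInt llo hAllo.le 0 t h0mem ht) (hInt llo hAllo.le t θb ht hbmem)
  have hopt' : ∀ l1 l2 t : ℝ, 0 < l1 → l1 ≤ l2 → l2 ≤ 1 → t ∈ Icc (0:ℝ) θb →
      (∫ θ in (0:ℝ)..t, Gfun c cinv (R A γ (φ θ) l1) * f θ) +
        (∫ θ in t..θb, Gfun c cinv (R A γ (φ θ) l2) * f θ) ≤
      ∫ θ in (0:ℝ)..θb, Gfun c cinv (R A γ (φ θ) llo) * f θ := by
    intro l1 l2 t h1 h2 h3 ht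
    have := hopt l1 l2 t h1 h2 h3 ht
    rw [hPib, hPib] at this
    rwa [hsplitt θhat hθhat] at this
  -- Step B : the pooled profit is positive, hence R(θb, llo) > 0
  have hφub : ∀ θ ∈ Icc (0:ℝ) θb, φ θ ≤ θb := by
    intro θ hθ
    have := hφmono.monotoneOn hθ hbmem hθ.2
    rwa [hφtop] at this
  have hP1pos : 0 < ∫ θ in (0:ℝ)..θb, Gfun c cinv (R A γ (φ θ) 1) * f θ := by
    obtain ⟨s, hs0, hsb, hsφ⟩ := near_left φ hbmem hθb
      (hφcont.continuousWithinAt hbmem) (by rw [hφtop]; linarith : (θb+γ)/2 < φ θb)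
    have hη : (0:ℝ) < (θb - γ)/2 := by linarith
    have hgain := gain_pos (h1 := fun _ => 0)
      (h2 := fun θ => Gfun c cinv (R A γ (φ θ) 1) * f θ)
      (a := 0) (b := θb) (s := s) (t := θb)
      (ε := Gfun c cinv ((θb - γ)/2) * f θm)
      hsb hs0.le le_rfl (mul_pos (hGpos hη) hfm)
      intervalIntegrable_const (hInt 1 hA1pos.le 0 θb h0mem hbmem) ?_ ?_
    · calc 0 = ∫ _ in (0:ℝ)..θb, (0:ℝ) := by simp
        _ < _ := hgain
    · intro θ hθ
      exact mul_nonneg (hGnn _) (hfpos θ hθ).le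
    · intro θ hθ
      have hθIcc : θ ∈ Icc (0:ℝ) θb := ⟨by linarith [hθ.1], hθ.2⟩
      have hφθ : (θb+γ)/2 < φ θ := hsφ θ hθ
      have hR1 : (θb - γ)/2 ≤ R A γ (φ θ) 1 := by
        rw [R_one hA1]; linarith
      have := mul_le_mul (hGmono hR1) (hfmin θ hθIcc) hfm.le (hGnn _)
      linarith
  have hIpos : 0 < ∫ θ in (0:ℝ)..θb, Gfun c cinv (R A γ (φ θ) llo) * f θ := by
    have h1 := hopt' 1 1 θhat one_pos le_rfl le_rfl hθhat
    have h2 : (∫ θ in (0:ℝ)..θhat, Gfun c cinv (R A γ (φ θ) 1) * f θ) +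
        (∫ θ in θhat..θb, Gfun c cinv (R A γ (φ θ) 1) * f θ) =
        ∫ θ in (0:ℝ)..θb, Gfun c cinv (R A γ (φ θ) 1) * f θ :=
      integral_add_adjacent_intervals (hInt 1 hA1pos.le 0 θhat h0mem hθhat)
        (hInt 1 hA1pos.le θhat θb hθhat hbmem)
    rw [h2] at h1
    linarith
  have hFpos : 0 < R A γ θb llo := by
    by_contra hF
    push_neg at hF
    have hzero : EqOn (fun θ => Gfun c cinv (R A γ (φ θ) llo) * f θ) (fun _ => 0)
        (uIcc 0 θb) := by
      intro θ hθ
      rw [uIcc_of_le hθb.le] at hθ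
      have hRθ : R A γ (φ θ) llo ≤ 0 :=
        le_trans (R_mono_x (hφub θ hθ) hAllo.le) hF
      simp [hG0 hRθ]
    have := intervalIntegral.integral_congr (μ := volume) hzero
    rw [this] at hIpos
    simp at hIpos
  -- Step C : the key "no pointwise improvement" property of the pooled optimum
  have star : ∀ l : ℝ, 0 < l → l ≤ 1 → ∀ t ∈ Ioo (0:ℝ) θb,
      R A γ (φ t) l ≤ max (R A γ (φ t) llo) 0 := by
    intro l hl0 hl1 t ht
    by_contra hR
    push_neg at hR
    have htIcc : t ∈ Icc (0:ℝ) θb := ⟨ht.1.le, ht.2.le⟩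
    set δ := R A γ (φ t) l - max (R A γ (φ t) llo) 0 with hδdef
    have hδ : 0 < δ := sub_pos.2 hR
    have hδle : δ ≤ R A γ (φ t) l - R A γ (φ t) llo := by
      have := le_max_left (R A γ (φ t) llo) 0
      simp only [hδdef]; linarith
    have hδle' : δ ≤ R A γ (φ t) l := by
      have := le_max_right (R A γ (φ t) llo) 0
      simp only [hδdef]; linarith
    have hAl : 0 < A l := hApos l hl0 hl1
    have hlne : l ≠ llo := by
      intro h
      rw [h] at hR
      exact absurd (le_max_left _ _) (not_le.2 hR)
    rcases lt_or_gt_of_ne hlne with hll | hll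
    · -- l < llo : bottom deviation (l, llo, t)
      have hAle : A l ≤ A llo :=
        (hAmono.monotoneOn ⟨hl0.le, hl1⟩ ⟨hllo.le, hhi1⟩ hll.le)
      have key1 : ∀ θ ∈ Icc (0:ℝ) t, R A γ (φ θ) llo + δ ≤ R A γ (φ θ) l := by
        intro θ hθ
        have hθIcc : θ ∈ Icc (0:ℝ) θb := ⟨hθ.1, le_trans hθ.2 ht.2.le⟩
        have hφle : φ θ ≤ φ t := hφmono.monotoneOn hθIcc htIcc hθ.2
        have e1 := R_shift A γ θb (φ θ) l
        have e2 := R_shift A γ θb (φ θ) llo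
        have e3 := R_shift A γ θb (φ t) l
        have e4 := R_shift A γ θb (φ t) llo
        nlinarith [mul_nonneg (sub_nonneg.2 hAle) (sub_nonneg.2 hφle)]
      -- continuity gives a left interval on which R(φθ, l) stays above δ/2
      obtain ⟨s, hs0, hst, hsu⟩ := near_left (fun θ => R A γ (φ θ) l) htIcc ht.1
        (R_comp_cwa (hφcont.continuousWithinAt htIcc)) (by linarith : δ/2 < R A γ (φ t) l)
      have hgain := gain_pos
        (h1 := fun θ => Gfun c cinv (R A γ (φ θ) llo) * f θ)
        (h2 := fun θ => Gfun c cinv (R A γ (φ θ) l) * f θ)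
        (a := 0) (b := t) (s := s) (t := t)
        (ε := Gfun c cinv (δ/2) * f θm)
        hst hs0.le le_rfl (mul_pos (hGpos (by linarith)) hfm)
        (hInt llo hAllo.le 0 t h0mem htIcc) (hInt l hAl.le 0 t h0mem htIcc) ?_ ?_
      · have h1 := hopt' l llo t hl0 hll.le hhi1 htIcc
        rw [← hsplitt t htIcc] at h1
        linarith
      · intro θ hθ
        have := key1 θ hθ
        have hGle : Gfun c cinv (R A γ (φ θ) llo) ≤ Gfun c cinv (R A γ (φ θ) l) :=
          hGmono (by linarith)
        have := hfpos θ ⟨hθ.1, le_trans hθ.2 ht.2.le⟩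
        nlinarith
      · intro θ hθ
        have hθIcc : θ ∈ Icc (0:ℝ) θb := ⟨by linarith [hθ.1], le_trans hθ.2 ht.2.le⟩
        have hk := key1 θ ⟨by linarith [hθ.1], hθ.2⟩
        have hu := hsu θ hθ
        have hmax : max (R A γ (φ θ) llo) 0 + δ/2 ≤ R A γ (φ θ) l := by
          rcases le_or_gt (R A γ (φ θ) llo) 0 with h | h
          · rw [max_eq_right h]; linarith
          · rw [max_eq_left h.le]; linarith
        have hgap := hGgap (by linarith : (0:ℝ) < δ/2) hmax
        have hfθ := hfmin θ hθIcc
        have hfθ' := hfpos θ hθIcc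
        nlinarith [hGpos (show (0:ℝ) < δ/2 by linarith), hGnn (R A γ (φ θ) llo)]
    · -- llo < l : top deviation (llo, l, t)
      have hAle : A llo ≤ A l :=
        (hAmono.monotoneOn ⟨hllo.le, hhi1⟩ ⟨hl0.le, hl1⟩ hll.le)
      have key1 : ∀ θ ∈ Icc t θb, R A γ (φ θ) llo + δ ≤ R A γ (φ θ) l ∧
          δ ≤ R A γ (φ θ) l := by
        intro θ hθ
        have hθIcc : θ ∈ Icc (0:ℝ) θb := ⟨le_trans ht.1.le hθ.1, hθ.2⟩
        have hφle : φ t ≤ φ θ := hφmono.monotoneOn htIcc hθIcc hθ.1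
        constructor
        · have e1 := R_shift A γ θb (φ θ) l
          have e2 := R_shift A γ θb (φ θ) llo
          have e3 := R_shift A γ θb (φ t) l
          have e4 := R_shift A γ θb (φ t) llo
          nlinarith [mul_nonneg (sub_nonneg.2 hAle) (sub_nonneg.2 hφle)]
        · exact le_trans hδle' (R_mono_x hφle hAl.le)
      have hgain := gain_pos
        (h1 := fun θ => Gfun c cinv (R A γ (φ θ) llo) * f θ)
        (h2 := fun θ => Gfun c cinv (R A γ (φ θ) l) * f θ)
        (a := t) (b := θb) (s := t) (t := θb)
        (ε := Gfun c cinv δ * f θm)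
        ht.2 le_rfl le_rfl (mul_pos (hGpos hδ) hfm)
        (hInt llo hAllo.le t θb htIcc hbmem) (hInt l hAl.le t θb htIcc hbmem) ?_ ?_
      · have h1 := hopt' llo l t hllo hll.le hl1 htIcc
        rw [← hsplitt t htIcc] at h1
        linarith
      · intro θ hθ
        have := (key1 θ hθ).1
        have hGle : Gfun c cinv (R A γ (φ θ) llo) ≤ Gfun c cinv (R A γ (φ θ) l) :=
          hGmono (by linarith)
        have := hfpos θ ⟨le_trans ht.1.le hθ.1, hθ.2⟩
        nlinarith
      · intro θ hθ
        have hθIcc : θ ∈ Icc (0:ℝ) θb := ⟨le_trans ht.1.le hθ.1, hθ.2⟩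
        obtain ⟨hk, hk'⟩ := key1 θ hθ
        have hmax : max (R A γ (φ θ) llo) 0 + δ ≤ R A γ (φ θ) l := by
          rcases le_or_gt (R A γ (φ θ) llo) 0 with h | h
          · rw [max_eq_right h]; linarith
          · rw [max_eq_left h.le]; linarith
        have hgap := hGgap hδ hmax
        have hfθ := hfmin θ hθIcc
        have hfθ' := hfpos θ hθIcc
        nlinarith [hGpos hδ, hGnn (R A γ (φ θ) llo)]
  -- Step D : R(θb, ·) is maximized at llo
  have hFmax : ∀ l : ℝ, 0 < l → l ≤ 1 → R A γ θb l ≤ R A γ θb llo := by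
    intro l hl0 hl1
    by_contra hgt
    push_neg at hgt
    have hcwa : ContinuousWithinAt
        (fun θ => R A γ (φ θ) l - max (R A γ (φ θ) llo) 0) (Icc 0 θb) θb := by
      have hφc := hφcont.continuousWithinAt hbmem
      exact (R_comp_cwa hφc).sub ((R_comp_cwa hφc).max continuousWithinAt_const)
    have hub : (0:ℝ) < R A γ (φ θb) l - max (R A γ (φ θb) llo) 0 := by
      rw [hφtop, max_eq_left hFpos.le]
      linarith
    obtain ⟨s, hs0, hsb, hsu⟩ := near_left _ hbmem hθb hcwa hub
    have hθ0 : (s + θb)/2 ∈ Icc s θb := ⟨by linarith, by linarith⟩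
    have hθ0' : (s + θb)/2 ∈ Ioo (0:ℝ) θb := ⟨by linarith, by linarith⟩
    have := hsu _ hθ0
    have := star l hl0 hl1 _ hθ0'
    linarith
  -- Step E : llo < 1
  have hllo1 : llo < 1 := by
    -- first produce some λ' < 1 with R(θb,λ') > R(θb,1) using hslope
    have hD1 : HasDerivWithinAt (fun l => R A γ θb l)
        ((θb + (1 - 1)/1) * A' 1 - A 1 / 1^2 + γ / 1^2) (Icc 0 1) 1 :=
      R_hasDerivWithinAt one_ne_zero (hAderiv 1 (right_mem_Icc.2 zero_le_one)) γ θb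
    have hD1' : HasDerivWithinAt (fun l => R A γ θb l)
        (θb * A' 1 - 1 + γ) (Icc 0 1) 1 := by
      convert hD1 using 1
      rw [hA1]; norm_num
    have hDneg : θb * A' 1 - 1 + γ < 0 := by linarith
    have htend := hasDerivWithinAt_iff_tendsto_slope.mp hD1'
    have hne : ((1:ℝ) ∈ closure (Icc 0 1 \ {1})) := by
      have hsub : Ico (0:ℝ) 1 ⊆ Icc 0 1 \ {1} :=
        fun x hx => ⟨⟨hx.1, hx.2.le⟩, ne_of_lt hx.2⟩
      have := closure_mono hsub
      rw [closure_Ico (by norm_num : (0:ℝ) ≠ 1)] at this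
      exact this (right_mem_Icc.2 zero_le_one)
    haveI hNB : (nhdsWithin (1:ℝ) (Icc 0 1 \ {1})).NeBot :=
      mem_closure_iff_nhdsWithin_neBot.mp hne
    have ev1 : ∀ᶠ x in nhdsWithin (1:ℝ) (Icc 0 1 \ {1}),
        slope (fun l => R A γ θb l) 1 x < 0 :=
      htend (Iio_mem_nhds hDneg)
    have ev2 : ∀ᶠ x in nhdsWithin (1:ℝ) (Icc 0 1 \ {1}), x ∈ Icc (0:ℝ) 1 \ {1} :=
      eventually_mem_nhdsWithin
    obtain ⟨x, hx1, hx2⟩ := (ev1.and ev2).exists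
    have hx3 : x < 1 := lt_of_le_of_ne hx2.1.2 hx2.2
    have hx0 : 0 ≤ x := hx2.1.1
    have hFx : R A γ θb 1 < R A γ θb x := by
      rw [slope_def_field] at hx1
      rcases div_neg_iff.mp hx1 with ⟨h1, h2⟩ | ⟨h1, h2⟩
      · linarith
      · linarith
    -- now if llo = 1 we contradict hFmax applied to x... but we need x > 0
    by_contra hge
    push_neg at hge
    have hllo1' : llo = 1 := le_antisymm hhi1 hge
    rcases eq_or_lt_of_le hx0 with hx0' | hx0'
    · -- x = 0 : R(θb, x) with x = 0 : division by zero, R A γ θb 0 = (θb + (1-0)/0)*A 0 - γ/0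
      rw [← hx0'] at hFx
      have : R A γ θb 0 = 0 := by
        simp [R, hA0]
      rw [this, R_one hA1] at hFx
      linarith
    · have := hFmax x hx0' hx3.le
      rw [hllo1'] at this
      linarith
  -- Step F : derivative of F at llo vanishes
  have hA_at : HasDerivAt A (A' llo) llo :=
    (hAderiv llo ⟨hllo.le, hhi1⟩).hasDerivAt (Icc_mem_nhds hllo hllo1)
  have hDat : HasDerivAt (fun l => R A γ θb l)
      ((θb + (1 - llo)/llo) * A' llo - A llo / llo^2 + γ / llo^2) llo := by
    rw [← hasDerivWithinAt_univ]
    exact R_hasDerivWithinAt (ne_of_gt hllo) (hA_at.hasDerivWithinAt) γ θb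
  have hlocmax : IsLocalMax (fun l => R A γ θb l) llo := by
    filter_upwards [Ioo_mem_nhds hllo hllo1] with x hx
    exact hFmax x hx.1 hx.2.le
  have hDv0 : (θb + (1 - llo)/llo) * A' llo - A llo / llo^2 + γ / llo^2 = 0 :=
    hlocmax.hasDerivAt_eq_zero hDat
  -- Step G : the κ-inequality from star
  obtain ⟨s, hs0, hsb, hsu⟩ := near_left (fun θ => R A γ (φ θ) llo) hbmem hθb
    (R_comp_cwa (hφcont.continuousWithinAt hbmem))
    (by rw [hφtop]; exact hFpos : (0:ℝ) < R A γ (φ θb) llo)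
  set θh := (s + θb)/2 with hθhdef
  have hθhIcc : θh ∈ Icc s θb := ⟨by simp only [hθhdef]; linarith,
    by simp only [hθhdef]; linarith⟩
  have hθhIoo : θh ∈ Ioo (0:ℝ) θb := ⟨by simp only [hθhdef]; linarith,
    by simp only [hθhdef]; linarith⟩
  have hθhIcc' : θh ∈ Icc (0:ℝ) θb := ⟨hθhIoo.1.le, hθhIoo.2.le⟩
  have hRθh : 0 < R A γ (φ θh) llo := hsu θh hθhIcc
  have hκ : 0 < θb - φ θh := by
    have := hφmono hθhIcc' hbmem hθhIoo.2
    rw [hφtop] at this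
    linarith
  have hkey : ∀ l1 : ℝ, 0 < l1 → l1 < llo →
      (θb - φ θh) * (A llo - A l1) ≤ R A γ θb llo - R A γ θb l1 := by
    intro l1 h10 h1llo
    have hstar := star l1 h10 (le_trans h1llo.le hhi1) θh hθhIoo
    rw [max_eq_left hRθh.le] at hstar
    have e1 := R_shift A γ θb (φ θh) l1
    have e2 := R_shift A γ θb (φ θh) llo
    nlinarith
  -- Step H : A' llo = 0
  have hA'0 : A' llo = 0 := by
    have htendA := hasDerivAt_iff_tendsto_slope.mp hA_at
    have htendW := hasDerivAt_iff_tendsto_slope.mp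
      (hDat.sub (hA_at.const_mul (θb - φ θh)))
    have hmono_filter : nhdsWithin llo (Iio llo) ≤ nhdsWithin llo ({llo}ᶜ) :=
      nhdsWithin_mono llo (fun x hx => ne_of_lt hx)
    have evpos : ∀ᶠ x in nhdsWithin llo (Iio llo), 0 < x :=
      eventually_nhdsWithin_of_eventually_nhds (eventually_gt_nhds hllo)
    have evmem : ∀ᶠ x in nhdsWithin llo (Iio llo), x ∈ Iio llo :=
      eventually_mem_nhdsWithin
    -- A' llo ≥ 0
    have hA'nn : 0 ≤ A' llo := by
      apply ge_of_tendsto (htendA.mono_left hmono_filter)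
      filter_upwards [evpos, evmem] with x hx0 hxlt
      have hAx : A x < A llo := hAmono ⟨hx0.le, le_trans (le_of_lt hxlt) hhi1⟩
        ⟨hllo.le, hhi1⟩ hxlt
      rw [slope_def_field]
      rw [div_nonneg_iff]
      right
      constructor <;> [linarith; linarith [show (x:ℝ) < llo from hxlt]]
    -- (θb - φ θh) * A' llo ≤ 0
    have hA'np : 0 ≤ (θb + (1 - llo)/llo) * A' llo - A llo / llo^2 + γ / llo^2
        - (θb - φ θh) * A' llo := by
      apply ge_of_tendsto (htendW.mono_left hmono_filter)
      filter_upwards [evpos, evmem] with x hx0 hxlt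
      have hW : R A γ θb x - (θb - φ θh) * A x ≤
          R A γ θb llo - (θb - φ θh) * A llo := by
        have := hkey x hx0 hxlt
        linarith
      rw [slope_def_field]
      simp only [Pi.sub_apply]
      rw [div_nonneg_iff]
      right
      constructor <;> [linarith; linarith [show (x:ℝ) < llo from hxlt]]
    rw [hDv0] at hA'np
    nlinarith
  -- Step I : conclude A llo = γ and derive the final contradiction
  have hAγ : A llo = γ := by
    rw [hA'0] at hDv0
    have hllone : llo ≠ 0 := ne_of_gt hllo
    have hsq : (0:ℝ) < llo^2 := by positivity
    field_simp at hDv0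
    nlinarith [hsq]
  have hFllo : R A γ θb llo = γ * θb - γ := by
    simp only [R, hAγ]
    field_simp
    ring
  have hF1 : R A γ θb 1 = θb - γ := R_one hA1 γ θb
  have := hFmax 1 one_pos le_rfl
  rw [hF1, hFllo] at this
  nlinarith
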